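/- arXiv:2104.08960 — 2 statements merged into one kernel-verified Lean document; each statement's English description precedes it below -/
import Mathlib

section
/- Let M be a 2×2 real matrix, B a nonzero vector in ℝ², and r a real number. Then det[B | e^{rM}B] ≠ 0 if and only if rank[B | MB] = 2 and, additionally: if M has two real eigenvalues or a single (repeated) eigenvalue then r ≠ 0, while if M has two complex conjugate non-real eigenvalues λ, λ̄ then r ∉ (π/Im(λ))·ℤ. -/
open Matrix Real

section Helpers

lemma cayley2 (M : Matrix (Fin 2) (Fin 2) ℝ) :
    M * M = M.trace • M - M.det • (1 : Matrix (Fin 2) (Fin 2) ℝ) := by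
  ext i j
  fin_cases i <;> fin_cases j <;>
    simp [Matrix.mul_apply, Fin.sum_univ_two, Matrix.trace_fin_two, Matrix.det_fin_two,
      Matrix.one_apply] <;> ring

lemma rank2_iff (A : Matrix (Fin 2) (Fin 2) ℝ) : A.rank = 2 ↔ A.det ≠ 0 := by
  constructor
  · intro h hdet
    obtain ⟨v, hv, hAv⟩ := (Matrix.exists_mulVec_eq_zero_iff).2 hdet
    have hker : v ∈ LinearMap.ker A.mulVecLin := by simpa [Matrix.mulVecLin] using hAv
    have h1 : 1 ≤ Module.finrank ℝ (LinearMap.ker A.mulVecLin) := by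
      have : Nontrivial (LinearMap.ker A.mulVecLin) :=
        Submodule.nontrivial_iff_ne_bot.2 (fun hbot => hv (by simpa [hbot] using hker))
      exact Module.finrank_pos
    have hrn := LinearMap.finrank_range_add_finrank_ker A.mulVecLin
    rw [Matrix.rank] at h
    simp [Module.finrank_fintype_fun_eq_card] at hrn
    omega
  · intro hdet
    have : IsUnit A := (Matrix.isUnit_iff_isUnit_det A).2 (isUnit_iff_ne_zero.2 hdet)
    simpa using A.rank_of_isUnit this

lemma exp_rep (M : Matrix (Fin 2) (Fin 2) ℝ) (a b : ℝ → ℝ)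
    (ha : ∀ x, HasDerivAt a (-(M.det) * b x) x)
    (hb : ∀ x, HasDerivAt b (a x + M.trace * b x) x)
    (ha0 : a 0 = 1) (hb0 : b 0 = 0) (r : ℝ) :
    NormedSpace.exp (r • M) = a r • (1 : Matrix (Fin 2) (Fin 2) ℝ) + b r • M := by
  letI : SeminormedRing (Matrix (Fin 2) (Fin 2) ℝ) := Matrix.linftyOpSemiNormedRing
  letI : NormedRing (Matrix (Fin 2) (Fin 2) ℝ) := Matrix.linftyOpNormedRing
  letI : NormedAlgebra ℝ (Matrix (Fin 2) (Fin 2) ℝ) := Matrix.linftyOpNormedAlgebra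
  letI : NormedAlgebra ℚ (Matrix (Fin 2) (Fin 2) ℝ) := Matrix.linftyOpNormedAlgebra
  set F : ℝ → Matrix (Fin 2) (Fin 2) ℝ :=
    fun x => NormedSpace.exp ((-x) • M) * (a x • (1 : Matrix (Fin 2) (Fin 2) ℝ) + b x • M)
    with hF
  have key : ∀ x, M * (a x • (1 : Matrix (Fin 2) (Fin 2) ℝ) + b x • M)
      = (-(M.det) * b x) • (1 : Matrix (Fin 2) (Fin 2) ℝ) + (a x + M.trace * b x) • M := by
    intro x
    rw [mul_add, mul_smul_comm, mul_smul_comm, mul_one, cayley2 M]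
    module
  have hFd : ∀ x, HasDerivAt F 0 x := by
    intro x
    have h1 : HasDerivAt (fun x : ℝ => NormedSpace.exp ((-x) • M))
        (-(NormedSpace.exp ((-x) • M) * M)) x := by
      have := (hasDerivAt_exp_smul_const (𝕂 := ℝ) M (-x)).scomp x (hasDerivAt_neg x)
      simp only [Function.comp_def, neg_smul, one_smul] at this ⊢
      exact this
    have h2 : HasDerivAt (fun x => a x • (1 : Matrix (Fin 2) (Fin 2) ℝ) + b x • M)
        ((-(M.det) * b x) • (1 : Matrix (Fin 2) (Fin 2) ℝ) + (a x + M.trace * b x) • M) x :=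
      ((ha x).smul_const _).add ((hb x).smul_const _)
    have h3 := h1.mul h2
    rw [hF]
    refine h3.congr_deriv ?_
    rw [← key x, neg_mul, mul_assoc]
    abel
  have hconst : F r = F 0 := by
    have : ∀ x, deriv F x = 0 := fun x => (hFd x).deriv
    exact is_const_of_deriv_eq_zero (fun x => (hFd x).differentiableAt) this r 0
  have hF0 : F 0 = 1 := by
    simp [hF, ha0, hb0, NormedSpace.exp_zero]
  have hmul : NormedSpace.exp (r • M) * NormedSpace.exp ((-r) • M) = 1 := by
    refine (NormedSpace.exp_add_of_commute (((Commute.refl M).smul_left r).smul_right (-r))).symm.trans ?_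
    simp [NormedSpace.exp_zero]
  calc NormedSpace.exp (r • M)
      = NormedSpace.exp (r • M) * F r := by rw [hconst, hF0, mul_one]
    _ = (NormedSpace.exp (r • M) * NormedSpace.exp ((-r) • M)) *
          (a r • (1 : Matrix (Fin 2) (Fin 2) ℝ) + b r • M) := by rw [hF]; rw [mul_assoc]
    _ = _ := by rw [hmul, one_mul]

lemma hd_exp (s x : ℝ) : HasDerivAt (fun x => Real.exp (s*x)) (s * Real.exp (s*x)) x := by
  simpa [mul_comm, Function.comp_def] using (Real.hasDerivAt_exp (s*x)).comp x ((hasDerivAt_id x).const_mul s)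

lemma hd_sinh (s x : ℝ) : HasDerivAt (fun x => Real.sinh (s*x)) (s * Real.cosh (s*x)) x := by
  simpa [mul_comm, Function.comp_def] using (Real.hasDerivAt_sinh (s*x)).comp x ((hasDerivAt_id x).const_mul s)

lemma hd_cosh (s x : ℝ) : HasDerivAt (fun x => Real.cosh (s*x)) (s * Real.sinh (s*x)) x := by
  simpa [mul_comm, Function.comp_def] using (Real.hasDerivAt_cosh (s*x)).comp x ((hasDerivAt_id x).const_mul s)

lemma hd_sin (s x : ℝ) : HasDerivAt (fun x => Real.sin (s*x)) (s * Real.cos (s*x)) x := by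
  simpa [mul_comm, Function.comp_def] using (Real.hasDerivAt_sin (s*x)).comp x ((hasDerivAt_id x).const_mul s)

lemma hd_cos (s x : ℝ) : HasDerivAt (fun x => Real.cos (s*x)) (-(s * Real.sin (s*x))) x := by
  simpa [mul_comm, Function.comp_def] using (Real.hasDerivAt_cos (s*x)).comp x ((hasDerivAt_id x).const_mul s)

lemma odeH (s ω d : ℝ) (hω : ω ≠ 0) (hd : ω^2 = s^2 - d) :
    (∀ x, HasDerivAt (fun x => Real.exp (s*x) * Real.cosh (ω*x) - s * (Real.exp (s*x) * Real.sinh (ω*x) / ω))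
      (-d * (Real.exp (s*x) * Real.sinh (ω*x) / ω)) x) ∧
    (∀ x, HasDerivAt (fun x => Real.exp (s*x) * Real.sinh (ω*x) / ω)
      ((Real.exp (s*x) * Real.cosh (ω*x) - s * (Real.exp (s*x) * Real.sinh (ω*x) / ω))
        + (2*s) * (Real.exp (s*x) * Real.sinh (ω*x) / ω)) x) := by
  constructor
  · intro x
    have h := ((hd_exp s x).mul (hd_cosh ω x)).sub
      ((((hd_exp s x).mul (hd_sinh ω x)).div_const ω).const_mul s)
    refine h.congr_deriv (Eq.symm ?_)
    field_simp
    linear_combination (-(Real.sinh (x*ω))) * hd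
  · intro x
    have h := ((hd_exp s x).mul (hd_sinh ω x)).div_const ω
    refine h.congr_deriv (Eq.symm ?_)
    field_simp
    ring

lemma odeT (s ω d : ℝ) (hω : ω ≠ 0) (hd : ω^2 = d - s^2) :
    (∀ x, HasDerivAt (fun x => Real.exp (s*x) * Real.cos (ω*x) - s * (Real.exp (s*x) * Real.sin (ω*x) / ω))
      (-d * (Real.exp (s*x) * Real.sin (ω*x) / ω)) x) ∧
    (∀ x, HasDerivAt (fun x => Real.exp (s*x) * Real.sin (ω*x) / ω)
      ((Real.exp (s*x) * Real.cos (ω*x) - s * (Real.exp (s*x) * Real.sin (ω*x) / ω))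
        + (2*s) * (Real.exp (s*x) * Real.sin (ω*x) / ω)) x) := by
  constructor
  · intro x
    have h := ((hd_exp s x).mul (hd_cos ω x)).sub
      ((((hd_exp s x).mul (hd_sin ω x)).div_const ω).const_mul s)
    refine h.congr_deriv (Eq.symm ?_)
    field_simp
    linear_combination (Real.sin (x*ω)) * hd
  · intro x
    have h := ((hd_exp s x).mul (hd_sin ω x)).div_const ω
    refine h.congr_deriv (Eq.symm ?_)
    field_simp
    ring

lemma odeD (s d : ℝ) (hd : d = s^2) :
    (∀ x, HasDerivAt (fun x => Real.exp (s*x) - s * (x * Real.exp (s*x)))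
      (-d * (x * Real.exp (s*x))) x) ∧
    (∀ x, HasDerivAt (fun x => x * Real.exp (s*x))
      ((Real.exp (s*x) - s * (x * Real.exp (s*x))) + (2*s) * (x * Real.exp (s*x))) x) := by
  constructor
  · intro x
    have h := (hd_exp s x).sub (((hasDerivAt_id x).mul (hd_exp s x)).const_mul s)
    refine h.congr_deriv (Eq.symm ?_)
    simp only [id_eq]; rw [hd]; ring
  · intro x
    have h := (hasDerivAt_id x).mul (hd_exp s x)
    refine h.congr_deriv (Eq.symm ?_)
    simp only [id_eq]; ring

lemma charpoly_eval (M : Matrix (Fin 2) (Fin 2) ℝ) (z : ℂ) :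
    (M.map Complex.ofReal).charpoly.eval z
      = z^2 - (M.trace : ℂ) * z + (M.det : ℂ) := by
  set N := M.map Complex.ofReal with hN
  rw [Matrix.charpoly, Matrix.det_fin_two,
    Matrix.charmatrix_apply_eq, Matrix.charmatrix_apply_eq,
    Matrix.charmatrix_apply_ne _ _ _ (by decide : (0:Fin 2) ≠ 1),
    Matrix.charmatrix_apply_ne _ _ _ (by decide : (1:Fin 2) ≠ 0)]
  simp [hN, Matrix.trace_fin_two, Matrix.det_fin_two, Matrix.map_apply]
  ring

lemma charpoly_root_iff (M : Matrix (Fin 2) (Fin 2) ℝ) (z : ℂ) :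
    z ∈ (M.map Complex.ofReal).charpoly.roots ↔
      z^2 - (M.trace : ℂ) * z + (M.det : ℂ) = 0 := by
  rw [Polynomial.mem_roots ((M.map Complex.ofReal).charpoly_monic.ne_zero),
    Polynomial.IsRoot, charpoly_eval]

lemma root_parts (M : Matrix (Fin 2) (Fin 2) ℝ) (z : ℂ)
    (hz : z ∈ (M.map Complex.ofReal).charpoly.roots) :
    z.re^2 - z.im^2 - M.trace * z.re + M.det = 0 ∧ z.im * (2*z.re - M.trace) = 0 := by
  have h0 := (charpoly_root_iff M z).1 hz
  rw [Complex.ext_iff] at h0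
  obtain ⟨h1, h2⟩ := h0
  simp [pow_two, Complex.mul_re, Complex.mul_im] at h1 h2
  constructor
  · nlinarith [h1]
  · nlinarith [h2]

lemma roots_real (M : Matrix (Fin 2) (Fin 2) ℝ) (h : 4*M.det ≤ M.trace^2) :
    ∀ lam ∈ (M.map Complex.ofReal).charpoly.roots, lam.im = 0 := by
  intro lam hl
  obtain ⟨h1, h2⟩ := root_parts M lam hl
  by_contra him
  have hre : 2*lam.re = M.trace := by
    rcases mul_eq_zero.1 h2 with h | h
    · exact absurd h him
    · linarith
  nlinarith [sq_nonneg lam.im, lt_of_le_of_ne (sq_nonneg lam.im) (fun hh => him (by nlinarith [sq_nonneg lam.im]))]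

lemma det_row_formula (B v : Fin 2 → ℝ) :
    ((Matrix.of ![B, v])ᵀ).det = B 0 * v 1 - v 0 * B 1 := by
  rw [Matrix.det_fin_two]
  simp [Matrix.transpose_apply]

end Helpers

/-- For a 2×2 real matrix `M`, a nonzero vector `B ∈ ℝ²` and `r ∈ ℝ`,
`det [B | e^{rM}B] ≠ 0` iff `rank [B | MB] = 2` together with: `r ≠ 0` when all complex
eigenvalues of `M` are real (two real eigenvalues or one repeated eigenvalue), and
`r ∉ (π / Im λ)·ℤ` for the non-real eigenvalues `λ` otherwise. -/
theorem stmt0 (M : Matrix (Fin 2) (Fin 2) ℝ) (B : Fin 2 → ℝ) (hB : B ≠ 0) (r : ℝ) :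
    ((Matrix.of ![B, (NormedSpace.exp (r • M)).mulVec B])ᵀ).det ≠ 0 ↔
      ((Matrix.of ![B, M.mulVec B])ᵀ).rank = 2 ∧
      ((∀ lam ∈ (M.map (Complex.ofReal)).charpoly.roots, lam.im = 0) → r ≠ 0) ∧
      (∀ lam ∈ (M.map (Complex.ofReal)).charpoly.roots, lam.im ≠ 0 →
        ∀ k : ℤ, r ≠ (π / lam.im) * k) := by
  have hrank : ((Matrix.of ![B, M.mulVec B])ᵀ).rank = 2 ↔
      B 0 * M.mulVec B 1 - M.mulVec B 0 * B 1 ≠ 0 := by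
    rw [rank2_iff, det_row_formula]
  set E : ℝ := B 0 * M.mulVec B 1 - M.mulVec B 0 * B 1 with hE
  -- generic determinant formula given an exp representation
  have detf : ∀ (c1 c2 : ℝ),
      (NormedSpace.exp (r • M) = c1 • (1 : Matrix (Fin 2) (Fin 2) ℝ) + c2 • M) →
      ((Matrix.of ![B, (NormedSpace.exp (r • M)).mulVec B])ᵀ).det = c2 * E := by
    intro c1 c2 hab
    rw [det_row_formula, hab, Matrix.add_mulVec, Matrix.smul_mulVec,
      Matrix.smul_mulVec, Matrix.one_mulVec, hE]
    simp [Pi.smul_apply, smul_eq_mul]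
    ring
  rcases lt_trichotomy (M.trace^2 - 4*M.det) 0 with hΔ | hΔ | hΔ
  · -- complex conjugate roots
    obtain ⟨s, hs⟩ : ∃ s:ℝ, M.trace = 2*s := ⟨M.trace/2, by ring⟩
    obtain ⟨ω, hωpos, hω2⟩ : ∃ ω:ℝ, 0 < ω ∧ ω^2 = M.det - s^2 :=
      ⟨Real.sqrt (4*M.det - M.trace^2)/2,
        div_pos (Real.sqrt_pos.2 (by linarith)) two_pos,
        by
          rw [div_pow, Real.sq_sqrt (by linarith : (0:ℝ) ≤ 4*M.det - M.trace^2)]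
          linear_combination (-(M.trace + 2*s)/4) * hs⟩
    obtain ⟨ha, hb⟩ := odeT s ω M.det hωpos.ne' hω2
    rw [← hs] at hb
    have hab := exp_rep M _ _ ha hb (by simp) (by simp) r
    rw [detf _ _ hab]
    -- the root s + ω i
    have ht := hs
    have hz0 : ((s:ℂ) + (ω:ℂ)*Complex.I) ∈ (M.map Complex.ofReal).charpoly.roots := by
      rw [charpoly_root_iff, ht, Complex.ext_iff]
      constructor
      · simp [pow_two, Complex.mul_re, Complex.mul_im]
        nlinarith [hω2]
      · simp [pow_two, Complex.mul_re, Complex.mul_im]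
        ring
    have him0 : ((s:ℂ) + (ω:ℂ)*Complex.I).im = ω := by simp
    have hsin0 : Real.sin (ω*r) = 0 ↔ ∃ k : ℤ, r = (π/ω) * k := by
      rw [Real.sin_eq_zero_iff]
      constructor
      · rintro ⟨n, hn⟩
        refine ⟨n, ?_⟩
        field_simp
        linarith [hn]
      · rintro ⟨k, hk⟩
        refine ⟨k, ?_⟩
        rw [hk]
        field_simp
    have hsin : (Real.sin (ω*r) ≠ 0) ↔ (∀ k : ℤ, r ≠ (π / ω) * k) := by
      rw [Ne, hsin0, not_exists]
    have hbr : (Real.exp (s*r) * Real.sin (ω*r) / ω ≠ 0) ↔ Real.sin (ω*r) ≠ 0 := by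
      rw [div_ne_zero_iff, mul_ne_zero_iff]
      simp [Real.exp_ne_zero, hωpos.ne']
    constructor
    · intro hne
      have hmul := mul_ne_zero_iff.1 hne
      refine ⟨hrank.2 hmul.2, ?_, ?_⟩
      · intro hall
        exact absurd (hall _ hz0) (by rw [him0]; exact hωpos.ne')
      · intro lam hlam him k
        obtain ⟨h1, h2⟩ := root_parts M lam hlam
        have hre : lam.re = s := by
          rcases mul_eq_zero.1 h2 with h | h
          · exact absurd h him
          · rw [hs] at h; linarith
        have him2 : lam.im^2 = ω^2 := by
          linear_combination (-1)*h1 - hω2 + (lam.re - s)*hre - lam.re*ht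
        have hsk := (hsin.1 (hbr.1 hmul.1))
        rcases sq_eq_sq_iff_eq_or_eq_neg.1 him2 with h | h
        · rw [h]; exact hsk k
        · rw [h]
          intro hcon
          apply hsk (-k)
          rw [hcon, div_neg]
          push_cast
          ring
    · rintro ⟨h1, _, h3⟩
      refine mul_ne_zero (hbr.2 (hsin.2 ?_)) (hrank.1 h1)
      intro k
      have := h3 _ hz0 (by rw [him0]; exact hωpos.ne') k
      rwa [him0] at this
  · -- repeated real root
    obtain ⟨s, hs⟩ : ∃ s:ℝ, M.trace = 2*s := ⟨M.trace/2, by ring⟩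
    have hd : M.det = s^2 := by
      linear_combination (-(1:ℝ)/4)*hΔ + ((M.trace + 2*s)/4)*hs
    obtain ⟨ha, hb⟩ := odeD s M.det hd
    rw [← hs] at hb
    have hab := exp_rep M _ _ ha hb (by simp) (by simp) r
    rw [detf _ _ hab]
    have hreal := roots_real M (by linarith)
    constructor
    · intro hne
      have hmul := mul_ne_zero_iff.1 hne
      refine ⟨hrank.2 hmul.2, fun _ => ?_, fun lam hlam him _ => absurd (hreal lam hlam) him⟩
      intro hr0
      rw [hr0] at hmul
      simpa using hmul.1
    · rintro ⟨h1, h2, _⟩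
      have hr0 := h2 hreal
      exact mul_ne_zero (mul_ne_zero hr0 (Real.exp_ne_zero _)) (hrank.1 h1)
  · -- two distinct real roots
    obtain ⟨s, hs⟩ : ∃ s:ℝ, M.trace = 2*s := ⟨M.trace/2, by ring⟩
    obtain ⟨ω, hωpos, hω2⟩ : ∃ ω:ℝ, 0 < ω ∧ ω^2 = s^2 - M.det :=
      ⟨Real.sqrt (M.trace^2 - 4*M.det)/2,
        div_pos (Real.sqrt_pos.2 (by linarith)) two_pos,
        by
          rw [div_pow, Real.sq_sqrt (by linarith : (0:ℝ) ≤ M.trace^2 - 4*M.det)]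
          linear_combination ((M.trace + 2*s)/4) * hs⟩
    obtain ⟨ha, hb⟩ := odeH s ω M.det hωpos.ne' hω2
    rw [← hs] at hb
    have hab := exp_rep M _ _ ha hb (by simp) (by simp) r
    rw [detf _ _ hab]
    have hreal := roots_real M (by linarith)
    have hbr : (Real.exp (s*r) * Real.sinh (ω*r) / ω ≠ 0) ↔ r ≠ 0 := by
      rw [div_ne_zero_iff]
      constructor
      · rintro ⟨h, -⟩ hr0
        rw [hr0] at h
        simp at h
      · intro hr0
        refine ⟨mul_ne_zero (Real.exp_ne_zero _) ?_, hωpos.ne'⟩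
        rw [Real.sinh_ne_zero]
        exact mul_ne_zero hωpos.ne' hr0
    constructor
    · intro hne
      have hmul := mul_ne_zero_iff.1 hne
      exact ⟨hrank.2 hmul.2, fun _ => hbr.1 hmul.1,
        fun lam hlam him _ => absurd (hreal lam hlam) him⟩
    · rintro ⟨h1, h2, _⟩
      exact mul_ne_zero (hbr.2 (h2 hreal)) (hrank.1 h1)
end

section
/- Let k < n and let M : [0,1] → M_{n×k}(ℝ) be continuous, with associated multiplication operator 𝕄 : L²(0,1)ᵏ → L²(0,1)ⁿ, (𝕄h)(x) = M(x)h(x). Then the following are equivalent: (1) there exists C > 0 with ‖h‖_{L²(0,1)ᵏ} ≤ C‖𝕄h‖_{L²(0,1)ⁿ} for all h ∈ L²(0,1)ᵏ; (2) for every x ∈ [0,1] there exists a k×k submatrix M_ext of M (formed by choosing k of the n rows) with det M_ext(x) ≠ 0. -/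
open Matrix MeasureTheory

noncomputable def emulVec {k n : ℕ} (A : Matrix (Fin n) (Fin k) ℝ)
    (v : EuclideanSpace ℝ (Fin k)) : EuclideanSpace ℝ (Fin n) :=
  (WithLp.equiv 2 (Fin n → ℝ)).symm (A.mulVec (WithLp.equiv 2 (Fin k → ℝ) v))


lemma stmt5_rank_aux {k n : ℕ} (A : Matrix (Fin n) (Fin k) ℝ) :
    (∃ rows : Fin k → Fin n, Function.Injective rows ∧ (A.submatrix rows id).det ≠ 0)
    ↔ Function.Injective A.mulVec := by
  constructor
  · rintro ⟨rows, hinj, hdet⟩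
    have hu : Function.Injective (A.submatrix rows id).mulVec :=
      mulVec_injective_iff_isUnit.mpr ((isUnit_iff_isUnit_det _).mpr (Ne.isUnit hdet))
    intro v w hvw
    apply hu
    ext i
    simp only [mulVec, dotProduct, submatrix_apply, id]
    exact congrFun hvw (rows i)
  · intro hinj
    -- rows of A span ℝ^k
    have hrank : A.rank = k := by
      rw [Matrix.rank, LinearMap.finrank_range_of_inj hinj]
      simp [Module.finrank_pi]
    have hspan : Submodule.span ℝ (Set.range A) = ⊤ := by
      apply Submodule.eq_top_of_finrank_eq
      have h := A.rank_eq_finrank_span_row; rw [hrank] at h; refine h.symm.trans ?_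
      simp [Module.finrank_pi]
    obtain ⟨b, hbsub, hbspan, hbind⟩ := exists_linearIndependent ℝ (Set.range A)
    rw [hspan] at hbspan
    have hfin : b.Finite := (Set.finite_range A).subset hbsub
    haveI : Fintype b := hfin.fintype
    have hbasis : Module.Basis b ℝ (Fin k → ℝ) := Module.Basis.mk hbind (by rw [Subtype.range_coe, hbspan])
    have hcard : Fintype.card b = k := by
      have := Module.finrank_eq_card_basis hbasis
      simp only [Module.finrank_pi, Fintype.card_fin] at this
      omega
    have e : Fin k ≃ b := (Fintype.equivFinOfCardEq hcard).symm
    have hchoice : ∀ i : Fin k, ∃ j : Fin n, A j = (e i : Fin k → ℝ) := fun i => hbsub (e i).2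
    choose rows hrows using hchoice
    refine ⟨rows, ?_, ?_⟩
    · intro i j hij
      have : (e i : Fin k → ℝ) = (e j : Fin k → ℝ) := by rw [← hrows i, ← hrows j, hij]
      exact e.injective (Subtype.ext this)
    · have hli : LinearIndependent ℝ (fun i : Fin k => (A.submatrix rows id) i) := by
        have : (fun i : Fin k => (A.submatrix rows id) i) = (fun x : b => (x : Fin k → ℝ)) ∘ e := by
          funext i
          ext j
          simp only [submatrix_apply, id, Function.comp]
          rw [hrows i]
        rw [this]
        exact hbind.comp e e.injective
      exact ((isUnit_iff_isUnit_det _).mp (linearIndependent_rows_iff_isUnit.mp hli)).ne_zero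

lemma stmt5_cont_aux {k n : ℕ} (M : ℝ → Matrix (Fin n) (Fin k) ℝ)
    (hM : ContinuousOn M (Set.Icc 0 1)) :
    ContinuousOn
      (fun p : ℝ × EuclideanSpace ℝ (Fin k) => emulVec (M p.1) p.2)
      (Set.Icc 0 1 ×ˢ (Set.univ : Set (EuclideanSpace ℝ (Fin k)))) := by
  have hent : ∀ i j, ContinuousOn (fun x => M x i j) (Set.Icc (0:ℝ) 1) := fun i j => by
    have : Continuous (fun A : Matrix (Fin n) (Fin k) ℝ => A i j) :=
      (continuous_apply j).comp (continuous_apply i)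
    exact this.comp_continuousOn hM
  have h2 : ContinuousOn
      (fun p : ℝ × EuclideanSpace ℝ (Fin k) =>
        ((M p.1).mulVec (WithLp.equiv 2 (Fin k → ℝ) p.2) : Fin n → ℝ))
      (Set.Icc 0 1 ×ˢ (Set.univ : Set (EuclideanSpace ℝ (Fin k)))) := by
    apply continuousOn_pi.mpr
    intro i
    simp only [mulVec, dotProduct]
    apply continuousOn_finset_sum
    intro j _
    apply ContinuousOn.mul
    · exact (hent i j).comp continuousOn_fst (fun p hp => hp.1)
    · exact ((continuous_apply j).comp
        ((PiLp.continuous_ofLp 2 (fun _ : Fin k => ℝ)).comp continuous_snd)).continuousOn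
  exact (PiLp.continuous_toLp 2 (fun _ : Fin n => ℝ)).comp_continuousOn h2


/-- For `1 ≤ k < n` and a continuous `M : [0,1] → M_{n×k}(ℝ)` with associated
multiplication operator `𝕄 : L²((0,1);ℝᵏ) → L²((0,1);ℝⁿ)`, the coercivity estimate
`‖h‖ ≤ C‖𝕄h‖` (for some `C > 0`) holds iff for every `x ∈ [0,1]` some `k×k` submatrix of
`M(x)` obtained by selecting `k` rows has nonzero determinant. -/
theorem stmt5 (k n : ℕ) (hk : 1 ≤ k) (hkn : k < n) (M : ℝ → Matrix (Fin n) (Fin k) ℝ)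
    (hM : ContinuousOn M (Set.Icc 0 1))
    (T : Lp (E := EuclideanSpace ℝ (Fin k)) 2 (volume.restrict (Set.Icc (0:ℝ) 1)) →L[ℝ]
         Lp (E := EuclideanSpace ℝ (Fin n)) 2 (volume.restrict (Set.Icc (0:ℝ) 1)))
    (hT : ∀ f, (T f : ℝ → EuclideanSpace ℝ (Fin n))
        =ᵐ[volume.restrict (Set.Icc (0:ℝ) 1)]
          fun x => (WithLp.toLp 2 ((M x).mulVec (f x)) : EuclideanSpace ℝ (Fin n))) :
    (∃ C > (0:ℝ), ∀ f, ‖f‖ ≤ C * ‖T f‖) ↔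
      ∀ x ∈ Set.Icc (0:ℝ) 1, ∃ rows : Fin k → Fin n,
        Function.Injective rows ∧ ((M x).submatrix rows id).det ≠ 0 := by
  constructor
  · rintro ⟨C, hC, hest⟩ x₀ hx₀
    apply (stmt5_rank_aux (M x₀)).mpr
    by_contra hninj
    obtain ⟨a, b, hab, hne⟩ := Function.not_injective_iff.mp hninj
    have hv0 : (M x₀).mulVec (a - b) = 0 := by
      rw [Matrix.mulVec_sub, hab, sub_self]
    have hvne : a - b ≠ 0 := sub_ne_zero.mpr hne
    set ve : EuclideanSpace ℝ (Fin k) := (WithLp.equiv 2 (Fin k → ℝ)).symm (a - b) with hve_def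
    have hvene : ve ≠ 0 := by
      simp only [hve_def, ne_eq]
      intro h
      exact hvne ((WithLp.equiv 2 (Fin k → ℝ)).symm.injective (by simpa using h))
    set u : EuclideanSpace ℝ (Fin k) := ‖ve‖⁻¹ • ve with hu_def
    have hu1 : ‖u‖ = 1 := norm_smul_inv_norm hvene
    have hu0 : ∀ x, (M x).mulVec (a - b) = 0 → emulVec (M x) u = 0 := by
      intro x hx
      have h1 : WithLp.equiv 2 (Fin k → ℝ) u = ‖ve‖⁻¹ • (a - b) := by
        simp [hu_def, hve_def]
      unfold emulVec
      rw [h1, Matrix.mulVec_smul, hx, smul_zero]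
      simp
    set ε : ℝ := (2 * C)⁻¹ with hε_def
    have hε : 0 < ε := by positivity
    -- continuity of x ↦ emulVec (M x) u on Icc
    have hg : ContinuousOn (fun x : ℝ => emulVec (M x) u) (Set.Icc 0 1) := by
      have hc2 : ContinuousOn (fun x : ℝ => ((x, u) : ℝ × EuclideanSpace ℝ (Fin k)))
          (Set.Icc 0 1) := (continuous_id.prodMk continuous_const).continuousOn
      have h := (stmt5_cont_aux M hM).comp hc2 (fun x hx => ⟨hx, Set.mem_univ _⟩)
      exact h
    have hev : {x | ‖emulVec (M x) u‖ < ε} ∈ nhdsWithin x₀ (Set.Icc (0:ℝ) 1) := by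
      have hcw : ContinuousWithinAt (fun x : ℝ => emulVec (M x) u) (Set.Icc 0 1) x₀ :=
        hg x₀ hx₀
      have h0 : emulVec (M x₀) u = 0 := hu0 x₀ hv0
      rw [ContinuousWithinAt, h0] at hcw
      have := hcw (Metric.ball_mem_nhds 0 hε)
      refine Filter.mem_of_superset this ?_
      intro x hx
      simpa [mem_ball_zero_iff] using hx
    obtain ⟨δ, hδpos, hδ⟩ := Metric.mem_nhdsWithin_iff.mp hev
    set s : Set ℝ := Set.Icc 0 1 ∩ Metric.ball x₀ δ with hs_def
    have hs : MeasurableSet s := measurableSet_Icc.inter measurableSet_ball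
    have hsub : ∀ x ∈ s, ‖emulVec (M x) u‖ < ε := fun x hx => hδ ⟨hx.2, hx.1⟩
    -- measure of s
    have hμs_eq : (volume.restrict (Set.Icc (0:ℝ) 1)) s = volume s := by
      rw [Measure.restrict_apply hs, Set.inter_eq_left.mpr Set.inter_subset_left]
    obtain ⟨hx₀1, hx₀2⟩ := Set.mem_Icc.mp hx₀
    have hab' : max 0 (x₀ - δ) < min 1 (x₀ + δ) := by
      simp only [max_lt_iff, lt_min_iff]
      refine ⟨⟨by norm_num, by linarith⟩, ⟨by linarith, by linarith⟩⟩
    have hIoo : Set.Ioo (max 0 (x₀ - δ)) (min 1 (x₀ + δ)) ⊆ s := by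
      intro y hy
      refine ⟨⟨le_trans (le_max_left _ _) hy.1.le, le_trans hy.2.le (min_le_left _ _)⟩, ?_⟩
      rw [Metric.mem_ball, Real.dist_eq, abs_lt]
      constructor
      · have := le_max_right 0 (x₀ - δ); have := hy.1; linarith
      · have := min_le_right 1 (x₀ + δ); have := hy.2; linarith
    have hvolpos : 0 < volume s := by
      refine lt_of_lt_of_le ?_ (measure_mono hIoo)
      rw [Real.volume_Ioo]
      exact ENNReal.ofReal_pos.mpr (by linarith [hab'])
    have hμs_pos : 0 < (volume.restrict (Set.Icc (0:ℝ) 1)) s := by rw [hμs_eq]; exact hvolpos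
    have hμs_ne_top : (volume.restrict (Set.Icc (0:ℝ) 1)) s ≠ ⊤ := by
      rw [hμs_eq]
      exact ne_top_of_le_ne_top measure_ball_lt_top.ne (measure_mono Set.inter_subset_right)
    set f := indicatorConstLp (E := EuclideanSpace ℝ (Fin k))
      (μ := volume.restrict (Set.Icc (0:ℝ) 1)) 2 hs hμs_ne_top u with hf_def
    set P : ℝ := ((volume.restrict (Set.Icc (0:ℝ) 1)) s).toReal ^ ((1:ℝ)/2) with hP_def
    have hP : 0 < P := by
      apply Real.rpow_pos_of_pos
      exact ENNReal.toReal_pos hμs_pos.ne' hμs_ne_top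
    have hfnorm : ‖f‖ = P := by
      rw [hf_def, norm_indicatorConstLp (by norm_num) (by norm_num)]
      rw [hu1, one_mul, hP_def]
      norm_num
      rfl
    -- bound on ‖T f‖
    have hind_ne_top : eLpNorm (s.indicator fun _ => (ε:ℝ)) 2
        (volume.restrict (Set.Icc (0:ℝ) 1)) ≠ ⊤ := by
      rw [eLpNorm_indicator_const hs (by norm_num) (by norm_num)]
      exact ENNReal.mul_ne_top ENNReal.coe_ne_top
        (ENNReal.rpow_lt_top_of_nonneg (by norm_num) hμs_ne_top).ne
    have h1 : eLpNorm (T f) 2 (volume.restrict (Set.Icc (0:ℝ) 1))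
        ≤ eLpNorm (s.indicator fun _ => (ε:ℝ)) 2 (volume.restrict (Set.Icc (0:ℝ) 1)) := by
      apply eLpNorm_mono_ae
      filter_upwards [hT f, indicatorConstLp_coeFn (p := 2) (hs := hs) (hμs := hμs_ne_top)
        (c := u)] with x hTx hfx
      rw [hTx]
      by_cases hxs : x ∈ s
      · rw [← hf_def] at hfx
        have hfxu : f x = u := by rw [hfx, Set.indicator_of_mem hxs]
        rw [hfxu, Set.indicator_of_mem hxs, Real.norm_of_nonneg hε.le]
        exact (hsub x hxs).le
      · rw [← hf_def] at hfx
        have hfx0 : f x = 0 := by rw [hfx, Set.indicator_of_notMem hxs]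
        rw [hfx0, Set.indicator_of_notMem hxs]
        have : (M x).mulVec (0 : EuclideanSpace ℝ (Fin k)) = (0 : Fin n → ℝ) :=
          Matrix.mulVec_zero _
        simp [this]
    have hTf : ‖T f‖ ≤ ε * P := by
      rw [Lp.norm_def]
      have h2 := ENNReal.toReal_mono hind_ne_top h1
      refine le_trans h2 ?_
      rw [eLpNorm_indicator_const hs (by norm_num) (by norm_num)]
      rw [ENNReal.toReal_mul, hP_def]
      have : ((2:ENNReal).toReal) = 2 := by norm_num
      rw [this, ← ENNReal.toReal_rpow]
      apply le_of_eq
      congr 1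
      simp [Real.norm_of_nonneg hε.le]
    -- derive contradiction
    have hest_f := hest f
    rw [hfnorm] at hest_f
    have h3 : C * ‖T f‖ ≤ C * (ε * P) := mul_le_mul_of_nonneg_left hTf hC.le
    have hCε : C * ε = 1/2 := by
      rw [hε_def]
      field_simp
    nlinarith [hP, hest_f, h3]
  · intro hyp
    have hinj : ∀ x ∈ Set.Icc (0:ℝ) 1, Function.Injective (M x).mulVec :=
      fun x hx => (stmt5_rank_aux (M x)).mp (hyp x hx)
    haveI : Nonempty (Fin k) := ⟨⟨0, hk⟩⟩
    haveI : Nontrivial (EuclideanSpace ℝ (Fin k)) := inferInstance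
    have hcomp : IsCompact ((Set.Icc (0:ℝ) 1) ×ˢ (Metric.sphere (0 : EuclideanSpace ℝ (Fin k)) 1)) :=
      isCompact_Icc.prod (isCompact_sphere 0 1)
    have hne : ((Set.Icc (0:ℝ) 1) ×ˢ (Metric.sphere (0 : EuclideanSpace ℝ (Fin k)) 1)).Nonempty :=
      (Set.nonempty_Icc.mpr (by norm_num)).prod (NormedSpace.sphere_nonempty.mpr zero_le_one)
    have hcont : ContinuousOn
        (fun p : ℝ × EuclideanSpace ℝ (Fin k) => ‖emulVec (M p.1) p.2‖)
        ((Set.Icc (0:ℝ) 1) ×ˢ (Metric.sphere (0 : EuclideanSpace ℝ (Fin k)) 1)) :=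
      ((stmt5_cont_aux M hM).norm).mono (Set.prod_mono le_rfl (Set.subset_univ _))
    obtain ⟨p₀, hp₀, hmin⟩ := hcomp.exists_isMinOn hne hcont
    set c : ℝ := ‖emulVec (M p₀.1) p₀.2‖ with hc_def
    have hp₀2 : (p₀.2 : EuclideanSpace ℝ (Fin k)) ≠ 0 := by
      intro h
      have h2 := hp₀.2
      rw [mem_sphere_zero_iff_norm, h] at h2
      simp at h2
    have hc : 0 < c := by
      rw [hc_def, norm_pos_iff]
      intro h
      apply hp₀2
      have h0 : (M p₀.1).mulVec (WithLp.equiv 2 (Fin k → ℝ) p₀.2) = 0 := by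
        have := congrArg (WithLp.equiv 2 (Fin n → ℝ)) h
        simpa [emulVec] using this
      have h1 : (M p₀.1).mulVec (WithLp.equiv 2 (Fin k → ℝ) p₀.2) = (M p₀.1).mulVec 0 := by
        rw [h0, Matrix.mulVec_zero]
      exact (WithLp.equiv 2 (Fin k → ℝ)).injective (hinj p₀.1 hp₀.1 h1)
    have key : ∀ x ∈ Set.Icc (0:ℝ) 1, ∀ v : EuclideanSpace ℝ (Fin k),
        c * ‖v‖ ≤ ‖emulVec (M x) v‖ := by
      intro x hx v
      rcases eq_or_ne v 0 with rfl | hv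
      · simp [emulVec, Matrix.mulVec_zero]
      · set w : EuclideanSpace ℝ (Fin k) := ‖v‖⁻¹ • v with hw_def
        have hw : w ∈ Metric.sphere (0 : EuclideanSpace ℝ (Fin k)) 1 := by
          rw [mem_sphere_zero_iff_norm]
          exact norm_smul_inv_norm hv
        have h1 := isMinOn_iff.mp hmin (x, w) ⟨hx, hw⟩
        have h2 : emulVec (M x) w = ‖v‖⁻¹ • emulVec (M x) v := by
          simp [emulVec, hw_def, Matrix.mulVec_smul]
        rw [h2, norm_smul, norm_inv, norm_norm] at h1
        have hvpos : 0 < ‖v‖ := norm_pos_iff.mpr hv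
        rw [inv_mul_eq_div] at h1
        exact (le_div_iff₀ hvpos).mp h1
    refine ⟨c⁻¹, inv_pos.mpr hc, fun f => ?_⟩
    have hsq1 : ‖f‖ ^ 2 = ∫ x, ‖f x‖ ^ 2 ∂(volume.restrict (Set.Icc (0:ℝ) 1)) := by
      rw [← real_inner_self_eq_norm_sq, L2.inner_def]
      exact integral_congr_ae (Filter.Eventually.of_forall fun x => real_inner_self_eq_norm_sq _)
    have hsq2 : ‖T f‖ ^ 2 = ∫ x, ‖T f x‖ ^ 2 ∂(volume.restrict (Set.Icc (0:ℝ) 1)) := by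
      rw [← real_inner_self_eq_norm_sq, L2.inner_def]
      exact integral_congr_ae (Filter.Eventually.of_forall fun x => real_inner_self_eq_norm_sq _)
    have hint1 : Integrable (fun x => ‖f x‖ ^ 2) (volume.restrict (Set.Icc (0:ℝ) 1)) := by
      have h := L2.integrable_inner (𝕜 := ℝ) f f
      refine h.congr (Filter.Eventually.of_forall fun x => ?_)
      exact real_inner_self_eq_norm_sq _
    have hint2 : Integrable (fun x => ‖T f x‖ ^ 2) (volume.restrict (Set.Icc (0:ℝ) 1)) := by
      have h := L2.integrable_inner (𝕜 := ℝ) (T f) (T f)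
      refine h.congr (Filter.Eventually.of_forall fun x => ?_)
      exact real_inner_self_eq_norm_sq _
    have hae : ∀ᵐ x ∂(volume.restrict (Set.Icc (0:ℝ) 1)),
        c ^ 2 * ‖f x‖ ^ 2 ≤ ‖T f x‖ ^ 2 := by
      filter_upwards [hT f, ae_restrict_mem measurableSet_Icc] with x hTx hx
      have h := key x hx (f x)
      have h2 := mul_self_le_mul_self (mul_nonneg hc.le (norm_nonneg (f x))) h
      calc c ^ 2 * ‖f x‖ ^ 2 = (c * ‖f x‖) * (c * ‖f x‖) := by ring
        _ ≤ ‖emulVec (M x) (f x)‖ * ‖emulVec (M x) (f x)‖ := h2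
        _ = ‖T f x‖ ^ 2 := by rw [hTx, pow_two]; rfl
    have hmain : c ^ 2 * ‖f‖ ^ 2 ≤ ‖T f‖ ^ 2 := by
      rw [hsq1, hsq2, ← integral_const_mul]
      exact integral_mono_ae (hint1.const_mul _) hint2 hae
    have h3 : c * ‖f‖ ≤ ‖T f‖ := by
      have h4 : (c * ‖f‖) ^ 2 ≤ ‖T f‖ ^ 2 := by rw [mul_pow]; exact hmain
      calc c * ‖f‖ = Real.sqrt ((c * ‖f‖) ^ 2) :=
            (Real.sqrt_sq (mul_nonneg hc.le (norm_nonneg f))).symm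
        _ ≤ Real.sqrt (‖T f‖ ^ 2) := Real.sqrt_le_sqrt h4
        _ = ‖T f‖ := Real.sqrt_sq (norm_nonneg _)
    rw [inv_mul_eq_div, le_div_iff₀ hc, mul_comm]
    exact h3
end
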